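/- (γ̂_sq^{(p)} = 1/(4γ̂_sq^{(q)}) at the third level: the underlying algebraic identity.) Let 0 < p₃ < p₂ < 1 and 0 < q₃ < q₂ < 1, and set γ = (1/2)·((1−q₂)/(1−p₂))·((p₂−p₃)/(q₂−q₃))·√(q₃/p₃), c₂ = (1/(1−p₂))·((p₂−p₃)/(q₂−q₃))·√(q₃/p₃) − (1/(1−q₂))·((q₂−q₃)/(p₂−p₃))·√(p₃/q₃), and c₃ = (1/(p₂−p₃))·√(p₃/q₃) − (1/(q₂−q₃))·√(q₃/p₃). Then c₂(1 − p₂q₂) + c₃(p₂q₂ − p₃q₃) − 2γ = −1/(2γ). In particular, if γ' satisfies 0 = c₂(1 − p₂q₂) + c₃(p₂q₂ − p₃q₃) − 2γ + 2γ', then γ' = 1/(4γ). -/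

import Mathlib

private lemma third_level_aux (p₂ p₃ q₂ q₃ s t : ℝ)
    (hp3 : 0 < p₃) (hq3 : 0 < q₃)
    (hs0 : 0 < s) (ht0 : 0 < t) (hst : s * t = 1) (hssq : s ^ 2 * p₃ = q₃)
    (h1p : (0:ℝ) < 1 - p₂) (h1q : (0:ℝ) < 1 - q₂)
    (hpp : (0:ℝ) < p₂ - p₃) (hqq : (0:ℝ) < q₂ - q₃) :
    ((1 / (1 - p₂) * ((p₂ - p₃) / (q₂ - q₃)) * s - 1 / (1 - q₂) * ((q₂ - q₃) / (p₂ - p₃)) * t) * (1 - p₂ * q₂) +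
        (1 / (p₂ - p₃) * t - 1 / (q₂ - q₃) * s) * (p₂ * q₂ - p₃ * q₃) -
      2 * (1 / 2 * ((1 - q₂) / (1 - p₂)) * ((p₂ - p₃) / (q₂ - q₃)) * s)) *
      (2 * (1 / 2 * ((1 - q₂) / (1 - p₂)) * ((p₂ - p₃) / (q₂ - q₃)) * s)) = -1 := by
  have ht' : t = 1 / s := by field_simp at hst ⊢; linarith
  subst ht'
  have hq' : q₃ = s ^ 2 * p₃ := hssq.symm
  subst hq'
  have hqq' : q₂ - p₃ * s ^ 2 ≠ 0 := by rw [mul_comm]; exact hqq.ne'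
  field_simp
  ring

/-- The algebraic identity underlying `γ̂_sq^{(p)} = 1/(4γ̂_sq^{(q)})` at the third
level of lifting: with `γ, c₂, c₃` the closed-form optimal values,
`c₂(1 − p₂q₂) + c₃(p₂q₂ − p₃q₃) − 2γ = −1/(2γ)`; hence any `γ'` with
`0 = c₂(1 − p₂q₂) + c₃(p₂q₂ − p₃q₃) − 2γ + 2γ'` satisfies `γ' = 1/(4γ)`. -/
theorem third_level_gamma_p (p₂ p₃ q₂ q₃ : ℝ)
    (hp3 : 0 < p₃) (hp32 : p₃ < p₂) (hp2 : p₂ < 1)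
    (hq3 : 0 < q₃) (hq32 : q₃ < q₂) (hq2 : q₂ < 1)
    (γ c₂ c₃ : ℝ)
    (hγ : γ = (1 / 2) * ((1 - q₂) / (1 - p₂)) * ((p₂ - p₃) / (q₂ - q₃))
        * Real.sqrt (q₃ / p₃))
    (hc₂ : c₂ = (1 / (1 - p₂)) * ((p₂ - p₃) / (q₂ - q₃)) * Real.sqrt (q₃ / p₃)
        - (1 / (1 - q₂)) * ((q₂ - q₃) / (p₂ - p₃)) * Real.sqrt (p₃ / q₃))
    (hc₃ : c₃ = (1 / (p₂ - p₃)) * Real.sqrt (p₃ / q₃)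
        - (1 / (q₂ - q₃)) * Real.sqrt (q₃ / p₃)) :
    c₂ * (1 - p₂ * q₂) + c₃ * (p₂ * q₂ - p₃ * q₃) - 2 * γ = -1 / (2 * γ) ∧
    ∀ γ' : ℝ,
      0 = c₂ * (1 - p₂ * q₂) + c₃ * (p₂ * q₂ - p₃ * q₃) - 2 * γ + 2 * γ' →
      γ' = 1 / (4 * γ) := by
  set s := Real.sqrt (q₃ / p₃) with hs
  set t := Real.sqrt (p₃ / q₃) with ht
  have hs0 : 0 < s := Real.sqrt_pos.2 (div_pos hq3 hp3)
  have ht0 : 0 < t := Real.sqrt_pos.2 (div_pos hp3 hq3)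
  have hst : s * t = 1 := by
    rw [hs, ht, ← Real.sqrt_mul (by positivity)]
    rw [div_mul_div_comm, mul_comm q₃ p₃, div_self (by positivity), Real.sqrt_one]
  have hssq : s ^ 2 * p₃ = q₃ := by
    rw [hs, Real.sq_sqrt (by positivity), div_mul_cancel₀ _ hp3.ne']
  have h1p : (0:ℝ) < 1 - p₂ := by linarith
  have h1q : (0:ℝ) < 1 - q₂ := by linarith
  have hpp : (0:ℝ) < p₂ - p₃ := by linarith
  have hqq : (0:ℝ) < q₂ - q₃ := by linarith
  have hγ0 : 0 < γ := by rw [hγ]; positivity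
  have key : c₂ * (1 - p₂ * q₂) + c₃ * (p₂ * q₂ - p₃ * q₃) - 2 * γ = -1 / (2 * γ) := by
    subst hγ hc₂ hc₃
    rw [eq_div_iff (by positivity)]
    exact third_level_aux p₂ p₃ q₂ q₃ s t hp3 hq3 hs0 ht0 hst hssq h1p h1q hpp hqq
  refine ⟨key, fun γ' h => ?_⟩
  rw [key] at h
  field_simp at h ⊢
  linarith
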